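/- Let F be a family of n axis-parallel closed rectangles in the plane and let G be the intersection graph of F. Then χ_CF^cn(G) = O(log n); specifically, G admits a closed CF-coloring with at most 3·⌈log₂ n⌉ + 3 colors. -/

import Mathlib

open Finset

private def flip3 (x : Fin 3) : Fin 3 := if x = 0 then 1 else 0

private lemma chainML {ι : Type*} (S : Finset ι) (c d : ι → ℝ)
    (hcd : ∀ i ∈ S, c i ≤ d i) :
    ∀ (N : ℕ) (y : ℝ) (ε : Fin 3), (ε = 0 ∨ ε = 1) →
    (S.filter fun i => y < d i).card ≤ N →
    ∃ (l : List ι) (col : ι → Fin 3),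
      (∀ τ ∈ l, τ ∈ S ∧ y < d τ) ∧
      (∀ σ l', l = σ :: l' → ∀ I ∈ S, c I ≤ y → y < d I → d I ≤ d σ) ∧
      (∀ σ l', l = σ :: l' → ∀ τ ∈ l', d σ < d τ) ∧
      (∀ σ l', l = σ :: l' → ∀ I ∈ S, y < d I → c σ ≤ d I) ∧
      (∀ i, i ∉ l → col i = 2) ∧
      (∀ σ l', l = σ :: l' → col σ = ε ∧ ∀ τ l'', l' = τ :: l'' → col τ = flip3 ε) ∧
      (∀ σ τ l'', l = σ :: τ :: l'' → ∀ ρ ∈ l'', d σ < c ρ) ∧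
      (∀ I ∈ S, y < c I → ∃ u ∈ S, (c u ≤ d I ∧ c I ≤ d u) ∧
        ∀ w ∈ S, (c w ≤ d I ∧ c I ≤ d w) → w ≠ u → col w ≠ col u) := by
  intro N
  induction N with
  | zero =>
    intro y ε hε hcard
    refine ⟨[], fun _ => 2, ?_, ?_, ?_, ?_, ?_, ?_, ?_, ?_⟩
    · intro τ hτ; exact absurd hτ List.not_mem_nil
    · intro σ l' h; exact absurd h (List.cons_ne_nil σ l').symm
    · intro σ l' h; exact absurd h (List.cons_ne_nil σ l').symm
    · intro σ l' h; exact absurd h (List.cons_ne_nil σ l').symm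
    · intro i _; rfl
    · intro σ l' h; exact absurd h (List.cons_ne_nil σ l').symm
    · intro σ τ l'' h; exact absurd h (List.cons_ne_nil σ (τ :: l'')).symm
    · intro I hIS hyc
      exfalso
      have hd : y < d I := lt_of_lt_of_le hyc (hcd I hIS)
      have h1 : I ∈ S.filter fun i => y < d i := mem_filter.2 ⟨hIS, hd⟩
      have := card_pos.2 ⟨I, h1⟩
      omega
  | succ N ih =>
    intro y ε hε hcard
    by_cases hT : (S.filter fun i => y < d i).Nonempty
    swap
    · refine ⟨[], fun _ => 2, ?_, ?_, ?_, ?_, ?_, ?_, ?_, ?_⟩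
      · intro τ hτ; exact absurd hτ List.not_mem_nil
      · intro σ l' h; exact absurd h (List.cons_ne_nil σ l').symm
      · intro σ l' h; exact absurd h (List.cons_ne_nil σ l').symm
      · intro σ l' h; exact absurd h (List.cons_ne_nil σ l').symm
      · intro i _; rfl
      · intro σ l' h; exact absurd h (List.cons_ne_nil σ l').symm
      · intro σ τ l'' h; exact absurd h (List.cons_ne_nil σ (τ :: l'')).symm
      · intro I hIS hyc
        exact absurd ⟨I, mem_filter.2 ⟨hIS, lt_of_lt_of_le hyc (hcd I hIS)⟩⟩ hT
    · obtain ⟨σ, hσT, hσ2, hσ3⟩ :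
        ∃ σ, (σ ∈ S ∧ y < d σ) ∧
          (∀ I ∈ S, c I ≤ y → y < d I → d I ≤ d σ) ∧
          (∀ I ∈ S, y < d I → c σ ≤ d I) := by
        by_cases hC : (S.filter fun i => c i ≤ y ∧ y < d i).Nonempty
        · obtain ⟨σ, hσ, hmax⟩ := exists_max_image _ d hC
          rw [mem_filter] at hσ
          refine ⟨σ, ⟨hσ.1, hσ.2.2⟩, ?_, ?_⟩
          · intro I hIS hcI hdI
            exact hmax I (mem_filter.2 ⟨hIS, hcI, hdI⟩)
          · intro I _ hdI
            exact le_of_lt (lt_of_le_of_lt hσ.2.1 hdI)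
        · obtain ⟨σ, hσ, hmin⟩ := exists_min_image _ d hT
          rw [mem_filter] at hσ
          refine ⟨σ, hσ, ?_, ?_⟩
          · intro I hIS hcI hdI
            exact absurd ⟨I, mem_filter.2 ⟨hIS, hcI, hdI⟩⟩ hC
          · intro I hIS hdI
            exact le_trans (hcd σ hσ.1) (hmin I (mem_filter.2 ⟨hIS, hdI⟩))
      have hsub : (S.filter fun i => d σ < d i).card ≤ N := by
        have hss : (S.filter fun i => d σ < d i) ⊆ (S.filter fun i => y < d i) := by
          intro i hi; rw [mem_filter] at hi ⊢
          exact ⟨hi.1, lt_trans hσT.2 hi.2⟩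
        have hns : σ ∉ (S.filter fun i => d σ < d i) := by
          rw [mem_filter]; exact fun h => lt_irrefl _ h.2
        have h1 : (S.filter fun i => d σ < d i).card <
            (S.filter fun i => y < d i).card :=
          card_lt_card ⟨hss, fun hsub2 => hns (hsub2 (mem_filter.2 hσT))⟩
        omega
      obtain ⟨l', col', P1, P3, P7, P9, P4, P5, PA, P6⟩ :=
        ih (d σ) (flip3 ε) (by rcases hε with rfl | rfl <;> simp [flip3]) hsub
      classical
      have hε2 : ε ≠ 2 := by rcases hε with rfl | rfl <;> decide
      have hfε2 : flip3 ε ≠ 2 := by rcases hε with rfl | rfl <;> decide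
      have hfεε : flip3 ε ≠ ε := by rcases hε with rfl | rfl <;> decide
      have hffε : flip3 (flip3 ε) = ε := by rcases hε with rfl | rfl <;> decide
      -- (E) property at frontier d σ
      have hEσ : ∀ τ l'', l' = τ :: l'' → ∀ ρ ∈ l'', d σ < c ρ := by
        intro τ l'' hl ρ hρ
        have hρl' : ρ ∈ l' := hl ▸ List.mem_cons_of_mem τ hρ
        have hρS := (P1 ρ hρl').1
        have hρd := (P1 ρ hρl').2
        by_contra hcon
        push_neg at hcon
        have h1 := P3 τ l'' hl ρ hρS hcon hρd
        exact absurd (P7 τ l'' hl ρ hρ) (not_lt.2 h1)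
      set colF : ι → Fin 3 := fun i => if i = σ then ε else col' i with hcolF
      have hcolσ : colF σ = ε := if_pos rfl
      have hcolne : ∀ i, i ≠ σ → colF i = col' i := fun i h => if_neg h
      refine ⟨σ :: l', colF, ?_, ?_, ?_, ?_, ?_, ?_, ?_, ?_⟩
      · intro τ hτ
        rcases List.mem_cons.1 hτ with rfl | hτ'
        · exact hσT
        · exact ⟨(P1 τ hτ').1, lt_trans hσT.2 (P1 τ hτ').2⟩
      · rintro σ₀ l₀ h I hIS hcI hdI
        cases h; exact hσ2 I hIS hcI hdI
      · rintro σ₀ l₀ h τ hτ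
        cases h; exact (P1 τ hτ).2
      · rintro σ₀ l₀ h I hIS hdI
        cases h; exact hσ3 I hIS hdI
      · intro i hi
        have hiσ : i ≠ σ := by rintro rfl; exact hi List.mem_cons_self
        rw [hcolne i hiσ]
        exact P4 i (fun h => hi (List.mem_cons_of_mem σ h))
      · rintro σ₀ l₀ h
        cases h
        refine ⟨hcolσ, ?_⟩
        rintro τ l'' rfl
        have hτσ : τ ≠ σ := by
          intro h
          have := (P1 τ List.mem_cons_self).2
          rw [h] at this
          exact lt_irrefl _ this
        rw [hcolne τ hτσ]
        exact (P5 τ l'' rfl).1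
      · rintro σ₀ τ l'' h ρ hρ
        cases h
        exact hEσ τ l'' rfl ρ hρ
      · -- payload
        intro I hIS hyc
        have hdI : y < d I := lt_of_lt_of_le hyc (hcd I hIS)
        have hcσdI : c σ ≤ d I := hσ3 I hIS hdI
        by_cases hB : c I ≤ d σ
        swap
        · obtain ⟨u, huS, huMt, huniq⟩ := P6 I hIS (not_le.1 hB)
          have huσ : u ≠ σ := by rintro rfl; exact hB huMt.2
          refine ⟨u, huS, huMt, ?_⟩
          intro w hwS hwMt hwu
          have hwσ : w ≠ σ := by rintro rfl; exact hB hwMt.2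
          rw [hcolne w hwσ, hcolne u huσ]
          exact huniq w hwS hwMt hwu
        · have hwl' : ∀ w, w ≠ σ → col' w ≠ 2 → w ∈ l' := by
            intro w hwσ hw
            by_contra hmem
            exact hw (P4 w hmem)
          rcases hll : l' with _ | ⟨σ₂, l''⟩
          · -- l' = []
            refine ⟨σ, hσT.1, ⟨hcσdI, hB⟩, ?_⟩
            intro w hwS hwMt hwσ
            rw [hcolσ, hcolne w hwσ]
            intro hcol
            have := hwl' w hwσ (by rw [hcol]; exact hε2)
            rw [hll] at this
            exact List.not_mem_nil this
          · -- l' = σ₂ :: l''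
            have hσ₂l' : σ₂ ∈ l' := by rw [hll]; exact List.mem_cons_self
            have hσ₂S := (P1 σ₂ hσ₂l').1
            have hσ₂d := (P1 σ₂ hσ₂l').2
            have hσ₂σ : σ₂ ≠ σ := fun h => lt_irrefl _ (h ▸ hσ₂d)
            have hcolσ₂ : col' σ₂ = flip3 ε := (P5 σ₂ l'' hll).1
            have hdom := P3 σ₂ l'' hll
            have hc2 := P9 σ₂ l'' hll
            -- any deep w in l'' met by I forces I to meet σ₂, and bounds
            have hdIσ₂ : c I ≤ d σ₂ := le_trans hB (le_of_lt hσ₂d)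
            by_cases hMt2 : c σ₂ ≤ d I
            swap
            · -- doesn't meet σ₂ : witness σ
              refine ⟨σ, hσT.1, ⟨hcσdI, hB⟩, ?_⟩
              intro w hwS hwMt hwσ
              rw [hcolσ, hcolne w hwσ]
              intro hcol
              have hwmem := hwl' w hwσ (by rw [hcol]; exact hε2)
              rw [hll] at hwmem
              rcases List.mem_cons.1 hwmem with rfl | hwmem
              · rw [hcol] at hcolσ₂; exact hfεε hcolσ₂.symm
              · -- w ∈ l'' : I meets w ⇒ meets σ₂, contra
                have hcw : d σ < c w := hEσ σ₂ l'' hll w hwmem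
                have : d σ < d I := lt_of_lt_of_le hcw hwMt.1
                exact hMt2 (hc2 I hIS this)
            · -- meets σ₂
              rcases hlll : l'' with _ | ⟨σ₃, l'''⟩
              · -- only σ, σ₂ : witness σ
                refine ⟨σ, hσT.1, ⟨hcσdI, hB⟩, ?_⟩
                intro w hwS hwMt hwσ
                rw [hcolσ, hcolne w hwσ]
                intro hcol
                have hwmem := hwl' w hwσ (by rw [hcol]; exact hε2)
                rw [hll, hlll] at hwmem
                rcases List.mem_cons.1 hwmem with rfl | hwmem
                · rw [hcol] at hcolσ₂; exact hfεε hcolσ₂.symm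
                · exact List.not_mem_nil hwmem
              · have hσ₃l'' : σ₃ ∈ l'' := by rw [hlll]; exact List.mem_cons_self
                have hcσ₃ : d σ < c σ₃ := hEσ σ₂ l'' hll σ₃ hσ₃l''
                have hcolσ₃ : col' σ₃ = ε := by
                  have := (P5 σ₂ l'' hll).2 σ₃ l''' hlll
                  rw [hffε] at this; exact this
                have hdeepbound : ∀ w ∈ l''', ¬(c w ≤ d I ∧ c I ≤ d w) := by
                  intro w hw hMtw
                  have hcw : d σ₂ < c w := by
                    have : l' = σ₂ :: σ₃ :: l''' := by rw [hll, hlll]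
                    exact PA σ₂ σ₃ l''' this w hw
                  have hdI2 : d σ < d I :=
                    lt_of_lt_of_le (lt_trans hσ₂d hcw) hMtw.1
                  have : d I ≤ d σ₂ := hdom I hIS hB hdI2
                  exact absurd hMtw.1 (not_le.2 (lt_of_le_of_lt this hcw))
                by_cases hMt3 : c σ₃ ≤ d I ∧ c I ≤ d σ₃
                · -- full window : witness σ₂
                  refine ⟨σ₂, hσ₂S, ⟨hMt2, hdIσ₂⟩, ?_⟩
                  intro w hwS hwMt hwσ₂
                  rw [hcolne σ₂ hσ₂σ, hcolσ₂]
                  by_cases hwσ : w = σ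
                  · subst hwσ; rw [hcolσ]
                    exact fun h => hfεε h.symm
                  · rw [hcolne w hwσ]
                    intro hcol
                    have hwmem := hwl' w hwσ (by rw [hcol]; exact hfε2)
                    rw [hll] at hwmem
                    rcases List.mem_cons.1 hwmem with rfl | hwmem
                    · exact hwσ₂ rfl
                    · rw [hlll] at hwmem
                      rcases List.mem_cons.1 hwmem with rfl | hwmem
                      · rw [hcolσ₃] at hcol; exact hfεε hcol.symm
                      · exact hdeepbound w hwmem hwMt
                · -- not meeting σ₃ : witness σ
                  refine ⟨σ, hσT.1, ⟨hcσdI, hB⟩, ?_⟩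
                  intro w hwS hwMt hwσ
                  rw [hcolσ, hcolne w hwσ]
                  intro hcol
                  have hwmem := hwl' w hwσ (by rw [hcol]; exact hε2)
                  rw [hll] at hwmem
                  rcases List.mem_cons.1 hwmem with rfl | hwmem
                  · rw [hcol] at hcolσ₂; exact hfεε hcolσ₂.symm
                  · rw [hlll] at hwmem
                    rcases List.mem_cons.1 hwmem with rfl | hwmem
                    · exact hMt3 hwMt
                    · exact hdeepbound w hwmem hwMt

/-- Closed conflict-free coloring of interval intersection graphs with 3 colors. -/
private lemma interval_cf {ι : Type*} (S : Finset ι) (c d : ι → ℝ)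
    (hcd : ∀ i ∈ S, c i ≤ d i) :
    ∃ col : ι → Fin 3, ∀ v ∈ S, ∃ u ∈ S, (c u ≤ d v ∧ c v ≤ d u) ∧
      ∀ w ∈ S, (c w ≤ d v ∧ c v ≤ d w) → w ≠ u → col w ≠ col u := by
  classical
  rcases S.eq_empty_or_nonempty with rfl | hS
  · exact ⟨fun _ => 0, fun v hv => absurd hv (notMem_empty v)⟩
  · obtain ⟨i₀, hi₀, hmin⟩ := exists_min_image S c hS
    set y := c i₀ - 1 with hy
    obtain ⟨l, col, -, -, -, -, -, -, -, hpay⟩ :=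
      chainML S c d hcd (S.filter fun i => y < d i).card y 0 (Or.inl rfl) le_rfl
    refine ⟨col, fun v hv => hpay v hv ?_⟩
    have := hmin v hv
    simp only [hy]
    linarith

private lemma median_exists {ι : Type*} (S : Finset ι) (a : ι → ℝ) (hS : S.Nonempty) :
    ∃ m : ℝ, (S.filter fun i => a i < m).card ≤ S.card / 2 ∧
      (S.filter fun i => m < a i).card ≤ S.card / 2 := by
  classical
  set k := (S.card + 1) / 2 with hk
  set D := S.filter (fun i => k ≤ (S.filter fun j => a j ≤ a i).card) with hD
  have hDne : D.Nonempty := by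
    obtain ⟨i, hi, hmax⟩ := exists_max_image S a hS
    refine ⟨i, mem_filter.2 ⟨hi, ?_⟩⟩
    have hsub : S ⊆ S.filter (fun j => a j ≤ a i) :=
      fun j hj => mem_filter.2 ⟨hj, hmax j hj⟩
    have h2 := card_le_card hsub
    have h3 : 1 ≤ S.card := card_pos.2 hS
    omega
  obtain ⟨i₀, hi₀D, hmin⟩ := exists_min_image D a hDne
  refine ⟨a i₀, ?_, ?_⟩
  · by_contra hcon
    push_neg at hcon
    have hfil : k ≤ (S.filter fun i => a i < a i₀).card := by
      have := card_le_card (filter_subset (fun i => a i < a i₀) S)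
      omega
    have hne : (S.filter fun i => a i < a i₀).Nonempty := by
      apply card_pos.1
      have h3 : 1 ≤ S.card := card_pos.2 hS
      omega
    obtain ⟨i₁, hi₁, hmax1⟩ := exists_max_image _ a hne
    have hi₁S := (mem_filter.1 hi₁).1
    have hi₁lt := (mem_filter.1 hi₁).2
    have hsub : (S.filter fun i => a i < a i₀) ⊆ S.filter (fun j => a j ≤ a i₁) :=
      fun j hj => mem_filter.2 ⟨(mem_filter.1 hj).1, hmax1 j hj⟩
    have hmem : i₁ ∈ D := mem_filter.2 ⟨hi₁S, le_trans hfil (card_le_card hsub)⟩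
    exact absurd hi₁lt (not_lt.2 (hmin i₁ hmem))
  · have h1 : k ≤ (S.filter fun j => a j ≤ a i₀).card := (mem_filter.1 hi₀D).2
    have h2 : (S.filter fun i => a i₀ < a i) = S \ S.filter (fun i => a i ≤ a i₀) := by
      rw [← Finset.filter_not]
      apply filter_congr
      intro i _
      simp [not_le]
    have h3 : (S.filter fun i => a i₀ < a i).card
        = S.card - (S.filter fun i => a i ≤ a i₀).card := by
      rw [h2, card_sdiff_of_subset (filter_subset _ S)]
    have h4 := card_le_card (filter_subset (fun i => a i ≤ a i₀) S)
    omega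

private lemma clog_half {s : ℕ} (hs : 2 ≤ s) :
    Nat.clog 2 (s / 2) + 1 ≤ Nat.clog 2 s := by
  rw [Nat.clog_of_two_le one_lt_two hs]
  have h1 : s / 2 ≤ (s + 2 - 1) / 2 := Nat.div_le_div_right (by omega)
  exact Nat.add_le_add_right (Nat.clog_mono_right 2 h1) 1

private lemma rect_cf {n : ℕ} (a b c d : Fin n → ℝ)
    (hab : ∀ i, a i ≤ b i) (hcd : ∀ i, c i ≤ d i) :
    ∀ (N : ℕ) (S : Finset (Fin n)), S.card ≤ N →
    ∃ col : Fin n → ℕ, (∀ i ∈ S, col i < 3 * Nat.clog 2 S.card + 3) ∧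
      ∀ v ∈ S, ∃ u ∈ S, ((a u ≤ b v ∧ a v ≤ b u) ∧ (c u ≤ d v ∧ c v ≤ d u)) ∧
        ∀ w ∈ S, ((a w ≤ b v ∧ a v ≤ b w) ∧ (c w ≤ d v ∧ c v ≤ d w)) → w ≠ u →
          col w ≠ col u := by
  intro N
  induction N with
  | zero =>
    intro S hS
    have : S = ∅ := card_eq_zero.1 (by omega)
    subst this
    exact ⟨fun _ => 0, fun i hi => absurd hi (notMem_empty i),
      fun v hv => absurd hv (notMem_empty v)⟩
  | succ N ih =>
    intro S hS
    by_cases hs1 : S.card ≤ 1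
    · refine ⟨fun _ => 0, fun i _ => by show (0:ℕ) < _; omega, fun v hv =>
        ⟨v, hv, ⟨⟨hab v, hab v⟩, hcd v, hcd v⟩, ?_⟩⟩
      intro w hw _ hwv
      exact absurd (card_le_one.1 hs1 w hw v hv) hwv
    · push_neg at hs1
      have hs2 : 2 ≤ S.card := hs1
      have hSne : S.Nonempty := card_pos.1 (by omega)
      obtain ⟨m, hLc, hRc⟩ := median_exists S a hSne
      classical
      set L := S.filter (fun i => b i < m) with hLdef
      set R := S.filter (fun i => m < a i) with hRdef
      set M := S.filter (fun i => a i ≤ m ∧ m ≤ b i) with hMdef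
      have hLsub : L ⊆ S.filter (fun i => a i < m) := by
        intro i hi
        rw [hLdef, mem_filter] at hi
        exact mem_filter.2 ⟨hi.1, lt_of_le_of_lt (hab i) hi.2⟩
      have hLcard : L.card ≤ S.card / 2 := le_trans (card_le_card hLsub) hLc
      have hRcard : R.card ≤ S.card / 2 := hRc
      have hhalf : S.card / 2 ≤ N := by omega
      obtain ⟨colL, hcolLb, hcolL⟩ := ih L (le_trans hLcard hhalf)
      obtain ⟨colR, hcolRb, hcolR⟩ := ih R (le_trans hRcard hhalf)
      obtain ⟨colM, hcolM⟩ := interval_cf M c d (fun i _ => hcd i)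
      set K := Nat.clog 2 S.card with hK
      have hLK : 3 * Nat.clog 2 L.card + 3 ≤ 3 * K := by
        have h1 : Nat.clog 2 L.card ≤ Nat.clog 2 (S.card / 2) :=
          Nat.clog_mono_right _ hLcard
        have h2 := clog_half hs2
        omega
      have hRK : 3 * Nat.clog 2 R.card + 3 ≤ 3 * K := by
        have h1 : Nat.clog 2 R.card ≤ Nat.clog 2 (S.card / 2) :=
          Nat.clog_mono_right _ hRcard
        have h2 := clog_half hs2
        omega
      -- basic membership facts
      have hLM : ∀ i ∈ L, i ∉ M := by
        intro i hiL hiM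
        rw [hLdef, mem_filter] at hiL
        rw [hMdef, mem_filter] at hiM
        exact absurd hiM.2.2 (not_le.2 hiL.2)
      have hRM : ∀ i ∈ R, i ∉ M := by
        intro i hiR hiM
        rw [hRdef, mem_filter] at hiR
        rw [hMdef, mem_filter] at hiM
        exact absurd hiM.2.1 (not_le.2 hiR.2)
      have hcover : ∀ i ∈ S, i ∉ M → i ∉ L → i ∈ R := by
        intro i hi hiM hiL
        rw [hMdef, mem_filter] at hiM
        rw [hLdef, mem_filter] at hiL
        rw [hRdef, mem_filter]
        refine ⟨hi, ?_⟩
        by_contra hcon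
        push_neg at hcon
        push_neg at hiL
        exact hiM ⟨hi, hcon, hiL hi⟩
      set col : Fin n → ℕ := fun i =>
        if i ∈ M then 3 * K + (colM i : ℕ) else if i ∈ L then colL i else colR i
        with hcoldef
      have hcolMval : ∀ i ∈ M, col i = 3 * K + (colM i : ℕ) := by
        intro i hi; rw [hcoldef]; simp only [if_pos hi]
      have hcolLval : ∀ i ∈ L, col i = colL i := by
        intro i hi; rw [hcoldef]
        simp only [if_neg (hLM i hi), if_pos hi]
      have hcolRval : ∀ i, i ∉ M → i ∉ L → col i = colR i := by
        intro i h1 h2; rw [hcoldef]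
        simp only [if_neg h1, if_neg h2]
      have hcolLsmall : ∀ i ∈ L, col i < 3 * K := by
        intro i hi
        rw [hcolLval i hi]
        exact lt_of_lt_of_le (hcolLb i hi) hLK
      have hcolRsmall : ∀ i ∈ R, col i < 3 * K := by
        intro i hi
        rw [hcolRval i (hRM i hi) (fun hiL => by
          rw [hLdef, mem_filter] at hiL
          rw [hRdef, mem_filter] at hi
          exact absurd (lt_trans hiL.2 hi.2) (not_lt.2 (hab i)))]
        exact lt_of_lt_of_le (hcolRb i hi) hRK
      have hcolMbig : ∀ i ∈ M, 3 * K ≤ col i := by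
        intro i hi; rw [hcolMval i hi]; omega
      refine ⟨col, ?_, ?_⟩
      · intro i hi
        by_cases hiM : i ∈ M
        · rw [hcolMval i hiM]
          have := (colM i).isLt
          omega
        · by_cases hiL : i ∈ L
          · have := hcolLsmall i hiL; omega
          · have := hcolRsmall i (hcover i hi hiM hiL); omega
      · intro v hv
        by_cases hvM : v ∈ M
        · obtain ⟨u, huM, huMt, huniq⟩ := hcolM v hvM
          have hvm := (mem_filter.1 (hMdef ▸ hvM)).2
          have hum := (mem_filter.1 (hMdef ▸ huM)).2
          refine ⟨u, (mem_filter.1 (hMdef ▸ huM)).1,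
            ⟨⟨le_trans hum.1 hvm.2, le_trans hvm.1 hum.2⟩, huMt⟩, ?_⟩
          intro w hw hwMt hwu hcol
          have hcu : 3 * K ≤ col u := hcolMbig u huM
          have hwM : w ∈ M := by
            by_contra hwM
            by_cases hwL : w ∈ L
            · have := hcolLsmall w hwL; omega
            · have := hcolRsmall w (hcover w hw hwM hwL); omega
          have hcolMeq : colM w = colM u := by
            have h1 := hcolMval w hwM
            have h2 := hcolMval u huM
            rw [h1, h2] at hcol
            exact Fin.ext (by omega)
          exact huniq w hwM hwMt.2 hwu hcolMeq
        · by_cases hvL : v ∈ L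
          · obtain ⟨u, huL, huMt, huniq⟩ := hcolL v hvL
            refine ⟨u, (mem_filter.1 (hLdef ▸ huL)).1, huMt, ?_⟩
            intro w hw hwMt hwu hcol
            have hcu : col u < 3 * K := hcolLsmall u huL
            by_cases hwM : w ∈ M
            · have := hcolMbig w hwM; omega
            · by_cases hwL : w ∈ L
              · rw [hcolLval w hwL, hcolLval u huL] at hcol
                exact huniq w hwL hwMt hwu hcol
              · -- w ∈ R : impossible since v ∈ L meets w
                have hwR := hcover w hw hwM hwL
                have hbv := (mem_filter.1 (hLdef ▸ hvL)).2
                have haw := (mem_filter.1 (hRdef ▸ hwR)).2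
                exact absurd hwMt.1.1 (not_le.2 (lt_trans hbv haw))
          · have hvR := hcover v hv hvM hvL
            obtain ⟨u, huR, huMt, huniq⟩ := hcolR v hvR
            refine ⟨u, (mem_filter.1 (hRdef ▸ huR)).1, huMt, ?_⟩
            intro w hw hwMt hwu hcol
            have hcu : col u < 3 * K := hcolRsmall u huR
            by_cases hwM : w ∈ M
            · have := hcolMbig w hwM; omega
            · by_cases hwL : w ∈ L
              · have hbw := (mem_filter.1 (hLdef ▸ hwL)).2
                have hav := (mem_filter.1 (hRdef ▸ hvR)).2
                exact absurd hwMt.1.2 (not_le.2 (lt_trans hbw hav))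
              · have hwR := hcover w hw hwM hwL
                rw [hcolRval w hwM hwL,
                  hcolRval u (hRM u huR) (fun huL => by
                    have hbu := (mem_filter.1 (hLdef ▸ huL)).2
                    have hau := (mem_filter.1 (hRdef ▸ huR)).2
                    exact absurd (lt_trans hbu hau) (not_lt.2 (hab u)))] at hcol
                exact huniq w hwR hwMt hwu hcol

/-- The intersection graph `G` of any family of `n` axis-parallel closed rectangles in the
plane satisfies `χ_CF^cn(G) = O(log n)`: it admits a closed CF-coloring with at most
`3·⌈log₂ n⌉ + 3` colors. -/
theorem rectangles_closedCF_log (n : ℕ) (a b c d : Fin n → ℝ)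
    (hab : ∀ i, a i ≤ b i) (hcd : ∀ i, c i ≤ d i)
    (G : SimpleGraph (Fin n))
    (hG : ∀ i j, G.Adj i j ↔ i ≠ j ∧
      ((Set.Icc (a i) (b i) ×ˢ Set.Icc (c i) (d i)) ∩
        (Set.Icc (a j) (b j) ×ˢ Set.Icc (c j) (d j))).Nonempty) :
    ∃ col : Fin n → Fin (3 * Nat.clog 2 n + 3),
      ∀ v, ∃ u ∈ insert v (G.neighborSet v),
        ∀ w ∈ insert v (G.neighborSet v), w ≠ u → col w ≠ col u := by
  classical
  obtain ⟨col, hb, hcf⟩ := rect_cf a b c d hab hcd n Finset.univ (by simp)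
  have hbb : ∀ i, col i < 3 * Nat.clog 2 n + 3 := by
    intro i
    have := hb i (Finset.mem_univ i)
    rwa [Finset.card_fin] at this
  have key : ∀ i j : Fin n,
      ((Set.Icc (a i) (b i) ×ˢ Set.Icc (c i) (d i)) ∩
        (Set.Icc (a j) (b j) ×ˢ Set.Icc (c j) (d j))).Nonempty ↔
      ((a j ≤ b i ∧ a i ≤ b j) ∧ (c j ≤ d i ∧ c i ≤ d j)) := by
    intro i j
    simp only [Set.prod_inter_prod, Set.prod_nonempty_iff, Set.Icc_inter_Icc,
      Set.nonempty_Icc, sup_le_iff, le_inf_iff]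
    have h1 := hab i; have h2 := hab j; have h3 := hcd i; have h4 := hcd j
    tauto
  have hmem : ∀ v w : Fin n, w ∈ insert v (G.neighborSet v) ↔
      ((a w ≤ b v ∧ a v ≤ b w) ∧ (c w ≤ d v ∧ c v ≤ d w)) := by
    intro v w
    rw [Set.mem_insert_iff]
    constructor
    · rintro (rfl | hw)
      · exact ⟨⟨hab w, hab w⟩, hcd w, hcd w⟩
      · have := ((hG v w).1 hw).2
        exact (key v w).1 this
    · intro hMt
      by_cases hvw : w = v
      · exact Or.inl hvw
      · refine Or.inr ?_
        rw [SimpleGraph.mem_neighborSet, hG v w]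
        exact ⟨fun h => hvw h.symm, (key v w).2 hMt⟩
  refine ⟨fun i => ⟨col i, hbb i⟩, ?_⟩
  intro v
  obtain ⟨u, -, hMt, huniq⟩ := hcf v (Finset.mem_univ v)
  refine ⟨u, (hmem v u).2 hMt, ?_⟩
  intro w hw hwu hcol
  exact huniq w (Finset.mem_univ w) ((hmem v w).1 hw) hwu (congrArg Fin.val hcol)
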